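/- In a Steiner triple system of order 21, the supports of any two distinct almost-sub-STS(9)'s intersect in exactly 3 points, and these 3 points form either a common block of the two almost-sub-STS(9)'s or the missing triple of at least one of them. -/

import Mathlib

set_option linter.unusedSectionVars false
set_option maxHeartbeats 1000000


variable {α : Type*} [DecidableEq α]

/-- `(S, B)` is a Steiner triple system: blocks are 3-subsets of `S`,
and every pair of distinct points of `S` lies in exactly one block. -/
def IsSTS (S : Finset α) (B : Finset (Finset α)) : Prop :=
  (∀ b ∈ B, b ⊆ S ∧ b.card = 3) ∧
  ∀ p ∈ S, ∀ q ∈ S, p ≠ q → ∃! b, b ∈ B ∧ p ∈ b ∧ q ∈ b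

/-- `T` is the block set of a transversal design with the three groups `A`, `B`, `C`:
every block meets every group in exactly one point, and every two points in
different groups meet in exactly one block. -/
def IsTD3 (A B C : Finset α) (T : Finset (Finset α)) : Prop :=
  (∀ b ∈ T, b ⊆ A ∪ B ∪ C ∧ (b ∩ A).card = 1 ∧ (b ∩ B).card = 1 ∧ (b ∩ C).card = 1) ∧
  ∀ p q : α, ((p ∈ A ∧ q ∈ B) ∨ (p ∈ A ∧ q ∈ C) ∨ (p ∈ B ∧ q ∈ C)) →
    ∃! b, b ∈ T ∧ p ∈ b ∧ q ∈ b

/-- `C` is an almost-sub-STS of the block set `Bl`, with support `S0` and missing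
triple `T`: `C ⊆ Bl` and `C = C' \ {T}` for some STS `(S0, C')` with `T ∈ C'`. -/
def IsAlmostSubSTS (Bl : Finset (Finset α)) (S0 : Finset α)
    (C : Finset (Finset α)) (T : Finset α) : Prop :=
  C ⊆ Bl ∧ T ∉ C ∧ IsSTS S0 (insert T C)

lemma sts_unique {S : Finset α} {Bl : Finset (Finset α)} (h : IsSTS S Bl)
    {b c : Finset α} {p q : α}
    (hb : b ∈ Bl) (hc : c ∈ Bl) (hpb : p ∈ b) (hqb : q ∈ b) (hpc : p ∈ c) (hqc : q ∈ c)
    (hpq : p ≠ q) : b = c := by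
  have hpS : p ∈ S := (h.1 b hb).1 hpb
  have hqS : q ∈ S := (h.1 b hb).1 hqb
  obtain ⟨d, -, hd⟩ := h.2 p hpS q hqS hpq
  rw [hd b ⟨hb, hpb, hqb⟩, hd c ⟨hc, hpc, hqc⟩]

lemma sts_degree {S : Finset α} {Bl : Finset (Finset α)} (h : IsSTS S Bl)
    {p : α} (hp : p ∈ S) :
    2 * (Bl.filter (fun b => p ∈ b)).card = S.card - 1 := by
  classical
  set F := Bl.filter (fun b => p ∈ b) with hF
  have key : F.biUnion (fun b => b.erase p) = S.erase p := by
    ext q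
    simp only [Finset.mem_biUnion, Finset.mem_filter, Finset.mem_erase, hF]
    constructor
    · rintro ⟨b, ⟨hb, hpb⟩, hq, hqb⟩
      exact ⟨hq, (h.1 b hb).1 hqb⟩
    · rintro ⟨hqp, hq⟩
      obtain ⟨b, ⟨hb, hpb, hqb⟩, -⟩ := h.2 p hp q hq (Ne.symm hqp)
      exact ⟨b, ⟨hb, hpb⟩, hqp, hqb⟩
  have hdisj : ∀ b₁ ∈ F, ∀ b₂ ∈ F, b₁ ≠ b₂ →
      Disjoint (b₁.erase p) (b₂.erase p) := by
    intro b₁ h₁ b₂ h₂ hne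
    simp only [hF, Finset.mem_filter] at h₁ h₂
    rw [Finset.disjoint_left]
    intro q hq₁ hq₂
    simp only [Finset.mem_erase] at hq₁ hq₂
    exact hne (sts_unique h h₁.1 h₂.1 h₁.2 hq₁.2 h₂.2 hq₂.2 (Ne.symm hq₁.1))
  have hcb := Finset.card_biUnion hdisj
  rw [key, Finset.card_erase_of_mem hp] at hcb
  have hsum : ∀ b ∈ F, (b.erase p).card = 2 := by
    intro b hb
    simp only [hF, Finset.mem_filter] at hb
    rw [Finset.card_erase_of_mem hb.2, (h.1 b hb.1).2]
  rw [Finset.sum_congr rfl hsum, Finset.sum_const, smul_eq_mul] at hcb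
  omega

lemma almost_block_mem {S S1 : Finset α} {Bl B1 : Finset (Finset α)} {T1 : Finset α}
    (hSTS : IsSTS S Bl) (h1 : IsAlmostSubSTS Bl S1 B1 T1)
    {b : Finset α} {p q : α} (hb : b ∈ Bl) (hpb : p ∈ b) (hqb : q ∈ b) (hpq : p ≠ q)
    (hp1 : p ∈ S1) (hq1 : q ∈ S1) (hT : ¬(p ∈ T1 ∧ q ∈ T1)) : b ∈ B1 := by
  obtain ⟨hsub, hTnot, hsts1⟩ := h1
  obtain ⟨c, ⟨hc, hpc, hqc⟩, -⟩ := hsts1.2 p hp1 q hq1 hpq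
  rcases Finset.mem_insert.mp hc with hcT | hcB
  · exact absurd ⟨hcT ▸ hpc, hcT ▸ hqc⟩ hT
  · have : b = c := sts_unique hSTS hb (hsub hcB) hpb hqb hpc hqc hpq
    exact this ▸ hcB

lemma almost_pair_T {S S1 : Finset α} {Bl B1 : Finset (Finset α)} {T1 : Finset α}
    (hSTS : IsSTS S Bl) (h1 : IsAlmostSubSTS Bl S1 B1 T1)
    {b : Finset α} {p q x : α} (hb : b ∈ Bl) (hpb : p ∈ b) (hqb : q ∈ b) (hpq : p ≠ q)
    (hp1 : p ∈ S1) (hq1 : q ∈ S1) (hx : x ∈ b) (hx1 : x ∉ S1) :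
    p ∈ T1 ∧ q ∈ T1 := by
  by_contra hT
  exact hx1 ((h1.2.2.1 b (Finset.mem_insert_of_mem
    (almost_block_mem hSTS h1 hb hpb hqb hpq hp1 hq1 hT))).1 hx)

lemma pair_cover_bound {S : Finset α} {Bl : Finset (Finset α)} (hSTS : IsSTS S Bl)
    {X Y : Finset α} (hXY : X ⊆ Y) :
    ((Finset.powersetCard 2 X).biUnion
      (fun P => (Bl.filter (fun b => P ⊆ b)).biUnion (fun b => b \ Y))).card
      ≤ (X.card).choose 2 := by
  classical
  calc ((Finset.powersetCard 2 X).biUnion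
      (fun P => (Bl.filter (fun b => P ⊆ b)).biUnion (fun b => b \ Y))).card
      ≤ ∑ P ∈ Finset.powersetCard 2 X,
          ((Bl.filter (fun b => P ⊆ b)).biUnion (fun b => b \ Y)).card :=
        Finset.card_biUnion_le
    _ ≤ ∑ P ∈ Finset.powersetCard 2 X, 1 := by
        apply Finset.sum_le_sum
        intro P hP
        rw [Finset.mem_powersetCard] at hP
        obtain ⟨hPX, hP2⟩ := hP
        calc ((Bl.filter (fun b => P ⊆ b)).biUnion (fun b => b \ Y)).card
            ≤ ∑ b ∈ Bl.filter (fun b => P ⊆ b), (b \ Y).card := Finset.card_biUnion_le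
          _ ≤ ∑ b ∈ Bl.filter (fun b => P ⊆ b), 1 := by
              apply Finset.sum_le_sum
              intro b hb
              rw [Finset.mem_filter] at hb
              have h3 : b.card = 3 := (hSTS.1 b hb.1).2
              have : b \ Y ⊆ b \ P := Finset.sdiff_subset_sdiff le_rfl (hPX.trans hXY)
              calc (b \ Y).card ≤ (b \ P).card := Finset.card_le_card this
                _ = b.card - P.card := Finset.card_sdiff_of_subset hb.2
                _ = 1 := by rw [h3, hP2]
          _ ≤ 1 := by
              rw [Finset.sum_const, smul_eq_mul, mul_one]
              apply Finset.card_le_one.mpr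
              intro b₁ hb₁ b₂ hb₂
              rw [Finset.mem_filter] at hb₁ hb₂
              obtain ⟨p, q, hpq, rfl⟩ := Finset.card_eq_two.mp hP2
              have hp₁ : p ∈ b₁ := hb₁.2 (by simp)
              have hq₁ : q ∈ b₁ := hb₁.2 (by simp)
              have hp₂ : p ∈ b₂ := hb₂.2 (by simp)
              have hq₂ : q ∈ b₂ := hb₂.2 (by simp)
              exact sts_unique hSTS hb₁.1 hb₂.1 hp₁ hq₁ hp₂ hq₂ hpq
    _ = (X.card).choose 2 := by
        rw [Finset.sum_const, smul_eq_mul, mul_one, Finset.card_powersetCard]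

lemma key_twos {S S1 S2 : Finset α} {Bl B1 B2 : Finset (Finset α)} {T1 T2 : Finset α}
    (hSTS : IsSTS S Bl)
    (h1 : IsAlmostSubSTS Bl S1 B1 T1) (h2 : IsAlmostSubSTS Bl S2 B2 T2)
    (hc1 : S1.card = 9) {x : α} (hx1 : x ∈ S1) (hx2 : x ∉ S2) :
    (S1 ∩ S2).card ≤ 6 ∧
    (5 ≤ (S1 ∩ S2).card →
      ((x ∈ T1 ∧ (T1 ∩ (S1 ∩ S2)).card = 2) ∨
       (∃ c ∈ Bl, x ∈ c ∧ (c ∩ (S1 ∩ S2)).card = 2 ∧ c ∩ (S1 ∩ S2) ⊆ T2))) ∧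
    ((S1 ∩ S2).card = 6 → x ∈ T1 ∧ (T1 ∩ (S1 ∩ S2)).card = 2) := by
  classical
  set I := S1 ∩ S2 with hI
  have hxI : x ∉ I := fun h => hx2 (Finset.mem_inter.mp h).2
  have hsts1 : IsSTS S1 (insert T1 B1) := h1.2.2
  set thr := (insert T1 B1).filter (fun c => x ∈ c) with hthr
  have hthr4 : thr.card = 4 := by
    have hd := sts_degree hsts1 hx1
    rw [hc1] at hd
    rw [hthr]
    omega
  have hcard3 : ∀ c ∈ thr, c.card = 3 := by
    intro c hc
    rw [hthr, Finset.mem_filter] at hc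
    exact (hsts1.1 c hc.1).2
  have hxthr : ∀ c ∈ thr, x ∈ c := by
    intro c hc; rw [hthr, Finset.mem_filter] at hc; exact hc.2
  have hdisj : ∀ c₁ ∈ thr, ∀ c₂ ∈ thr, c₁ ≠ c₂ → Disjoint (c₁ ∩ I) (c₂ ∩ I) := by
    intro c₁ h₁ c₂ h₂ hne
    rw [Finset.disjoint_left]
    intro y hy₁ hy₂
    rw [Finset.mem_inter] at hy₁ hy₂
    rw [hthr, Finset.mem_filter] at h₁ h₂
    exact hne (sts_unique hsts1 h₁.1 h₂.1 h₁.2 hy₁.1 h₂.2 hy₂.1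
      (fun h => hxI (h ▸ hy₁.2)))
  have hcover : thr.biUnion (fun c => c ∩ I) = I := by
    ext y
    simp only [Finset.mem_biUnion, Finset.mem_inter]
    constructor
    · rintro ⟨c, -, -, hy⟩; exact hy
    · intro hy
      have hyS1 : y ∈ S1 := (Finset.mem_inter.mp hy).1
      have hxy : x ≠ y := fun h => hxI (h ▸ hy)
      obtain ⟨c, ⟨hc, hxc, hyc⟩, -⟩ := hsts1.2 x hx1 y hyS1 hxy
      exact ⟨c, by rw [hthr, Finset.mem_filter]; exact ⟨hc, hxc⟩, hyc, hy⟩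
  have hsumI : ∑ c ∈ thr, (c ∩ I).card = I.card := by
    rw [← Finset.card_biUnion hdisj, hcover]
  have hle2 : ∀ c ∈ thr, (c ∩ I).card ≤ 2 := by
    intro c hc
    have : c ∩ I ⊆ c.erase x := by
      intro y hy
      rw [Finset.mem_inter] at hy
      rw [Finset.mem_erase]
      exact ⟨fun h => hxI (h ▸ hy.2), hy.1⟩
    calc (c ∩ I).card ≤ (c.erase x).card := Finset.card_le_card this
      _ = c.card - 1 := Finset.card_erase_of_mem (hxthr c hc)
      _ = 2 := by rw [hcard3 c hc]
  set twos := thr.filter (fun c => 2 ≤ (c ∩ I).card) with htwos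
  have hItwos : I.card ≤ 4 + twos.card := by
    have h1' : ∑ c ∈ thr, (c ∩ I).card ≤
        ∑ c ∈ thr, (1 + if 2 ≤ (c ∩ I).card then 1 else 0) := by
      apply Finset.sum_le_sum
      intro c hc
      have := hle2 c hc
      split <;> omega
    rw [hsumI] at h1'
    rw [Finset.sum_add_distrib, Finset.sum_const, smul_eq_mul, mul_one] at h1'
    rw [← Finset.card_filter] at h1'
    rw [hthr4] at h1'
    exact h1'
  -- structure of twos
  have htwoprop : ∀ c ∈ twos, c ≠ T1 →
      c ∈ Bl ∧ (c ∩ I).card = 2 ∧ c ∩ I ⊆ T2 := by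
    intro c hc hcT
    rw [htwos, Finset.mem_filter] at hc
    obtain ⟨hcthr, hc2⟩ := hc
    have hcB1 : c ∈ B1 := by
      rw [hthr, Finset.mem_filter] at hcthr
      rcases Finset.mem_insert.mp hcthr.1 with h | h
      · exact absurd h hcT
      · exact h
    have hcBl : c ∈ Bl := h1.1 hcB1
    have hcI2 : (c ∩ I).card = 2 := le_antisymm (hle2 c hcthr) hc2
    obtain ⟨p, q, hpq, hset⟩ := Finset.card_eq_two.mp hcI2
    have hp : p ∈ c ∩ I := hset ▸ (by simp)
    have hq : q ∈ c ∩ I := hset ▸ (by simp)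
    rw [Finset.mem_inter] at hp hq
    have hT2 : p ∈ T2 ∧ q ∈ T2 := by
      refine almost_pair_T hSTS h2 hcBl hp.1 hq.1 hpq ?_ ?_ (hxthr c hcthr) hx2
      · exact (Finset.mem_inter.mp hp.2).2
      · exact (Finset.mem_inter.mp hq.2).2
    refine ⟨hcBl, hcI2, ?_⟩
    rw [hset]
    intro y hy
    rcases Finset.mem_insert.mp hy with rfl | hy
    · exact hT2.1
    · rw [Finset.mem_singleton] at hy; exact hy ▸ hT2.2
  have herase : (twos.erase T1).card ≤ 1 := by
    apply Finset.card_le_one.mpr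
    intro c₁ h₁ c₂ h₂
    rw [Finset.mem_erase] at h₁ h₂
    by_contra hne
    obtain ⟨hBl₁, hI₁, hT₁⟩ := htwoprop c₁ h₁.2 h₁.1
    obtain ⟨hBl₂, hI₂, hT₂⟩ := htwoprop c₂ h₂.2 h₂.1
    have hthr₁ : c₁ ∈ thr := (Finset.mem_filter.mp (htwos ▸ h₁.2)).1
    have hthr₂ : c₂ ∈ thr := (Finset.mem_filter.mp (htwos ▸ h₂.2)).1
    have hd := hdisj c₁ hthr₁ c₂ hthr₂ hne
    have hT2card : T2.card = 3 := (h2.2.2.1 T2 (Finset.mem_insert_self _ _)).2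
    have : ((c₁ ∩ I) ∪ (c₂ ∩ I)).card ≤ 3 := by
      refine le_trans (Finset.card_le_card ?_) hT2card.le
      exact Finset.union_subset hT₁ hT₂
    rw [Finset.card_union_of_disjoint hd, hI₁, hI₂] at this
    omega
  have htwole : twos.card ≤ 2 := by
    have := Finset.card_erase_add_one (s := twos) (a := T1)
    by_cases hT : T1 ∈ twos
    · have := Finset.card_erase_add_one hT; omega
    · rw [Finset.erase_eq_of_notMem hT] at herase; omega
  have hT1twos : T1 ∈ twos → x ∈ T1 ∧ (T1 ∩ I).card = 2 := by
    intro hT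
    rw [htwos, Finset.mem_filter] at hT
    exact ⟨hxthr T1 hT.1, le_antisymm (hle2 T1 hT.1) hT.2⟩
  refine ⟨by omega, ?_, ?_⟩
  · intro h5
    have h1t : 1 ≤ twos.card := by omega
    obtain ⟨c, hc⟩ := Finset.card_pos.mp (by omega : 0 < twos.card)
    by_cases hT : T1 ∈ twos
    · exact Or.inl (hT1twos hT)
    · have hcT : c ≠ T1 := fun h => hT (h ▸ hc)
      obtain ⟨hBl, hI2, hsub⟩ := htwoprop c hc hcT
      exact Or.inr ⟨c, hBl, hxthr c (Finset.mem_filter.mp (htwos ▸ hc)).1, hI2, hsub⟩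
  · intro h6
    by_cases hT : T1 ∈ twos
    · exact hT1twos hT
    · rw [Finset.erase_eq_of_notMem hT] at herase
      omega

lemma lower_bound {S S1 S2 : Finset α} {Bl B1 B2 : Finset (Finset α)} {T1 T2 : Finset α}
    (hSTS : IsSTS S Bl) (hS21 : S.card = 21) (hS1 : S1 ⊆ S) (hS2 : S2 ⊆ S)
    (hc1 : S1.card = 9) (hc2 : S2.card = 9)
    (h1 : IsAlmostSubSTS Bl S1 B1 T1) (h2 : IsAlmostSubSTS Bl S2 B2 T2) :
    3 ≤ (S1 ∩ S2).card := by
  classical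
  by_contra hk
  push_neg at hk
  have hkle : (S1 ∩ S2).card ≤ 2 := by omega
  have hT1S1 : T1 ⊆ S1 := (h1.2.2.1 T1 (Finset.mem_insert_self _ _)).1
  have hT1card : T1.card = 3 := (h1.2.2.1 T1 (Finset.mem_insert_self _ _)).2
  have hT2card : T2.card = 3 := (h2.2.2.1 T2 (Finset.mem_insert_self _ _)).2
  set U := (Finset.powersetCard 2 T1).biUnion
      (fun P => (Bl.filter (fun b => P ⊆ b)).biUnion (fun b => b \ S1)) with hU
  have hUcard : U.card ≤ 3 := by
    have := pair_cover_bound hSTS hT1S1 (Bl := Bl)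
    rw [hT1card] at this
    exact le_trans this (by norm_num)
  -- find a good point x
  have hsd : (S2 \ S1).card + (S2 ∩ S1).card = S2.card := Finset.card_sdiff_add_card_inter S2 S1
  have hcomm : (S2 ∩ S1).card = (S1 ∩ S2).card := by rw [Finset.inter_comm]
  have hsd7 : 7 ≤ (S2 \ S1).card := by omega
  have hbig : ((S2 \ S1) \ (T2 ∪ U)).Nonempty := by
    rw [← Finset.card_pos]
    have h1' : (S2 \ S1).card - (T2 ∪ U).card ≤ ((S2 \ S1) \ (T2 ∪ U)).card :=
      Finset.le_card_sdiff _ _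
    have h2' : (T2 ∪ U).card ≤ 6 := by
      calc (T2 ∪ U).card ≤ T2.card + U.card := Finset.card_union_le _ _
        _ ≤ 6 := by omega
    omega
  obtain ⟨x, hx⟩ := hbig
  rw [Finset.mem_sdiff, Finset.mem_sdiff, Finset.mem_union] at hx
  obtain ⟨⟨hxS2, hxS1⟩, hxTU⟩ := hx
  push_neg at hxTU
  obtain ⟨hxT2, hxU⟩ := hxTU
  have hxS : x ∈ S := hS2 hxS2
  -- x is not "special": blocks through x meet S1 in at most one point
  have hns : ∀ b ∈ Bl, x ∈ b → (b ∩ S1).card ≤ 1 := by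
    intro b hb hxb
    by_contra hge
    push_neg at hge
    obtain ⟨p, hp, q, hq, hpq⟩ := Finset.one_lt_card.mp hge
    rw [Finset.mem_inter] at hp hq
    have hT := almost_pair_T hSTS h1 hb hp.1 hq.1 hpq hp.2 hq.2 hxb hxS1
    apply hxU
    rw [hU, Finset.mem_biUnion]
    refine ⟨{p, q}, ?_, ?_⟩
    · rw [Finset.mem_powersetCard]
      constructor
      · intro y hy
        rcases Finset.mem_insert.mp hy with rfl | hy
        · exact hT.1
        · rw [Finset.mem_singleton] at hy; exact hy ▸ hT.2
      · rw [Finset.card_insert_of_notMem (by simp [hpq]), Finset.card_singleton]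
    · rw [Finset.mem_biUnion]
      refine ⟨b, ?_, ?_⟩
      · rw [Finset.mem_filter]
        refine ⟨hb, ?_⟩
        intro y hy
        rcases Finset.mem_insert.mp hy with rfl | hy
        · exact hp.1
        · rw [Finset.mem_singleton] at hy; exact hy ▸ hq.1
      · rw [Finset.mem_sdiff]; exact ⟨hxb, hxS1⟩
  -- A : blocks through x meeting S1
  set A := Bl.filter (fun b => x ∈ b ∧ (b ∩ S1).Nonempty) with hA
  have hAdisj : ∀ b₁ ∈ A, ∀ b₂ ∈ A, b₁ ≠ b₂ → Disjoint (b₁ ∩ S1) (b₂ ∩ S1) := by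
    intro b₁ h₁ b₂ h₂ hne
    rw [hA, Finset.mem_filter] at h₁ h₂
    rw [Finset.disjoint_left]
    intro y hy₁ hy₂
    rw [Finset.mem_inter] at hy₁ hy₂
    exact hne (sts_unique hSTS h₁.1 h₂.1 h₁.2.1 hy₁.1 h₂.2.1 hy₂.1
      (fun h => hxS1 (h ▸ hy₁.2)))
  have hAcover : A.biUnion (fun b => b ∩ S1) = S1 := by
    ext p
    simp only [Finset.mem_biUnion]
    constructor
    · rintro ⟨b, -, hp⟩
      exact (Finset.mem_inter.mp hp).2
    · intro hp
      have hxp : x ≠ p := fun h => hxS1 (h ▸ hp)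
      obtain ⟨b, ⟨hb, hxb, hpb⟩, -⟩ := hSTS.2 x hxS p (hS1 hp) hxp
      refine ⟨b, ?_, Finset.mem_inter.mpr ⟨hpb, hp⟩⟩
      rw [hA, Finset.mem_filter]
      exact ⟨hb, hxb, ⟨p, Finset.mem_inter.mpr ⟨hpb, hp⟩⟩⟩
  have hAcard : A.card = 9 := by
    have hb := Finset.card_biUnion hAdisj
    rw [hAcover, hc1] at hb
    have hone : ∀ b ∈ A, (b ∩ S1).card = 1 := by
      intro b hb'
      rw [hA, Finset.mem_filter] at hb'
      have := hns b hb'.1 hb'.2.1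
      have := Finset.card_pos.mpr hb'.2.2
      omega
    rw [Finset.sum_congr rfl hone, Finset.sum_const, smul_eq_mul, mul_one] at hb
    omega
  -- Bb : the STS(9)-blocks of S2 through x
  set Bb := (insert T2 B2).filter (fun c => x ∈ c) with hBb
  have hBbcard : Bb.card = 4 := by
    have hd := sts_degree h2.2.2 hxS2
    rw [hc2] at hd
    rw [hBb]
    omega
  have hBbprop : ∀ c ∈ Bb, c ∈ Bl ∧ x ∈ c ∧ c ⊆ S2 := by
    intro c hc
    rw [hBb, Finset.mem_filter] at hc
    rcases Finset.mem_insert.mp hc.1 with h | h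
    · exact absurd (h ▸ hc.2) hxT2
    · exact ⟨h2.1 h, hc.2, (h2.2.2.1 c (Finset.mem_insert_of_mem h)).1⟩
  -- counting
  set thr := Bl.filter (fun b => x ∈ b) with hthrd
  have hthr10 : thr.card = 10 := by
    have hd := sts_degree hSTS hxS
    rw [hS21] at hd
    rw [hthrd]
    omega
  have hAthr : A ⊆ thr := by
    intro b hb
    rw [hA, Finset.mem_filter] at hb
    rw [hthrd, Finset.mem_filter]
    exact ⟨hb.1, hb.2.1⟩
  have hBbthr : Bb ⊆ thr := by
    intro c hc
    obtain ⟨h₁, h₂, -⟩ := hBbprop c hc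
    rw [hthrd, Finset.mem_filter]
    exact ⟨h₁, h₂⟩
  have hunion : (A ∪ Bb).card ≤ 10 := by
    rw [← hthr10]
    exact Finset.card_le_card (Finset.union_subset hAthr hBbthr)
  have hinter : (A ∩ Bb).card ≤ 2 := by
    have hsub : A ∩ Bb ⊆ (S1 ∩ S2).biUnion
        (fun p => Bl.filter (fun b => x ∈ b ∧ p ∈ b)) := by
      intro b hb
      rw [Finset.mem_inter] at hb
      obtain ⟨hbA, hbBb⟩ := hb
      rw [hA, Finset.mem_filter] at hbA
      obtain ⟨p, hp⟩ := hbA.2.2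
      rw [Finset.mem_inter] at hp
      have hpS2 : p ∈ S2 := (hBbprop b hbBb).2.2 hp.1
      rw [Finset.mem_biUnion]
      refine ⟨p, Finset.mem_inter.mpr ⟨hp.2, hpS2⟩, ?_⟩
      rw [Finset.mem_filter]
      exact ⟨hbA.1, hbA.2.1, hp.1⟩
    calc (A ∩ Bb).card ≤ ((S1 ∩ S2).biUnion
          (fun p => Bl.filter (fun b => x ∈ b ∧ p ∈ b))).card := Finset.card_le_card hsub
      _ ≤ ∑ p ∈ S1 ∩ S2, (Bl.filter (fun b => x ∈ b ∧ p ∈ b)).card :=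
          Finset.card_biUnion_le
      _ ≤ ∑ p ∈ S1 ∩ S2, 1 := by
          apply Finset.sum_le_sum
          intro p hp
          apply Finset.card_le_one.mpr
          intro b₁ h₁ b₂ h₂
          rw [Finset.mem_filter] at h₁ h₂
          have hxp : x ≠ p := fun h => hxS1 (h ▸ (Finset.mem_inter.mp hp).1)
          exact sts_unique hSTS h₁.1 h₂.1 h₁.2.1 h₁.2.2 h₂.2.1 h₂.2.2 hxp
      _ = (S1 ∩ S2).card := by rw [Finset.sum_const, smul_eq_mul, mul_one]
      _ ≤ 2 := hkle
  have := Finset.card_union_add_card_inter A Bb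
  rw [hAcard, hBbcard] at this
  omega

lemma upper_bound {S S1 S2 : Finset α} {Bl B1 B2 : Finset (Finset α)} {T1 T2 : Finset α}
    (hSTS : IsSTS S Bl) (hS1 : S1 ⊆ S) (hS2 : S2 ⊆ S)
    (hc1 : S1.card = 9) (hc2 : S2.card = 9)
    (h1 : IsAlmostSubSTS Bl S1 B1 T1) (h2 : IsAlmostSubSTS Bl S2 B2 T2)
    (hne : S1 ≠ S2) :
    (S1 ∩ S2).card ≤ 3 := by
  classical
  by_contra hk
  push_neg at hk
  set I := S1 ∩ S2 with hIdef
  have hIS1 : I ⊆ S1 := Finset.inter_subset_left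
  have hIS2 : I ⊆ S2 := Finset.inter_subset_right
  have hT1card : T1.card = 3 := (h1.2.2.1 T1 (Finset.mem_insert_self _ _)).2
  have hT2card : T2.card = 3 := (h2.2.2.1 T2 (Finset.mem_insert_self _ _)).2
  have hT2S2 : T2 ⊆ S2 := (h2.2.2.1 T2 (Finset.mem_insert_self _ _)).1
  have hT1S1 : T1 ⊆ S1 := (h1.2.2.1 T1 (Finset.mem_insert_self _ _)).1
  have hk9 : I.card ≤ 9 := hc1 ▸ Finset.card_le_card hIS1
  have hkne9 : I.card ≠ 9 := by
    intro h9
    have he1 : I = S1 := Finset.eq_of_subset_of_card_le hIS1 (by omega)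
    have he2 : I = S2 := Finset.eq_of_subset_of_card_le hIS2 (by omega)
    exact hne (he1 ▸ he2)
  have hsd : (S1 \ S2).card + (S1 ∩ S2).card = S1.card :=
    Finset.card_sdiff_add_card_inter S1 S2
  rw [← hIdef] at hsd
  obtain ⟨x, hx⟩ : (S1 \ S2).Nonempty := by
    rw [← Finset.card_pos]; omega
  rw [Finset.mem_sdiff] at hx
  obtain ⟨hx1, hx2⟩ := hx
  have hkey := key_twos hSTS h1 h2 hc1 hx1 hx2
  have hk6 : I.card ≤ 6 := hkey.1
  -- the case k = 6
  have hkne6 : I.card ≠ 6 := by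
    intro h6
    have hall : ∀ y ∈ S1 \ S2, y ∈ T1 := by
      intro y hy
      rw [Finset.mem_sdiff] at hy
      exact ((key_twos hSTS h1 h2 hc1 hy.1 hy.2).2.2 h6).1
    have hsub : S1 \ S2 ⊆ T1 := hall
    have hTeq : S1 \ S2 = T1 :=
      Finset.eq_of_subset_of_card_le hsub (by omega)
    have h2' := (hkey.2.2 h6).2
    have : T1 ∩ I = ∅ := by
      rw [← hTeq]
      rw [Finset.eq_empty_iff_forall_notMem]
      intro z hz
      rw [Finset.mem_inter, Finset.mem_sdiff] at hz
      exact hz.1.2 (hIS2 hz.2)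
    rw [this] at h2'
    simp at h2'
  -- the case k = 5
  have hkne5 : I.card ≠ 5 := by
    intro h5
    have h5' : 5 ≤ I.card := h5.ge
    -- U2 : points outside S2 on a block through a pair of T2 ∩ I
    set U2 := (Finset.powersetCard 2 (T2 ∩ I)).biUnion
        (fun P => (Bl.filter (fun b => P ⊆ b)).biUnion (fun b => b \ S2)) with hU2
    have hU2card : U2.card ≤ ((T2 ∩ I).card).choose 2 :=
      pair_cover_bound hSTS ((Finset.inter_subset_left).trans hT2S2)
    have hmemU2 : ∀ y ∈ S1 \ S2,
        (∃ c ∈ Bl, y ∈ c ∧ (c ∩ I).card = 2 ∧ c ∩ I ⊆ T2) → y ∈ U2 := by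
      rintro y hy ⟨c, hcBl, hyc, hcI, hcT2⟩
      rw [Finset.mem_sdiff] at hy
      rw [hU2, Finset.mem_biUnion]
      refine ⟨c ∩ I, ?_, ?_⟩
      · rw [Finset.mem_powersetCard]
        exact ⟨Finset.subset_inter hcT2 Finset.inter_subset_right, hcI⟩
      · rw [Finset.mem_biUnion]
        refine ⟨c, ?_, ?_⟩
        · rw [Finset.mem_filter]
          exact ⟨hcBl, Finset.inter_subset_left⟩
        · rw [Finset.mem_sdiff]; exact ⟨hyc, hy.2⟩
    by_cases hTI : (T1 ∩ I).card = 2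
    · -- |T1 ∩ I| = 2
      have hsub : S1 \ S2 ⊆ (T1 \ I) ∪ U2 := by
        intro y hy
        have hy' := Finset.mem_sdiff.mp hy
        rcases (key_twos hSTS h1 h2 hc1 hy'.1 hy'.2).2.1 h5' with hl | hr
        · rw [Finset.mem_union, Finset.mem_sdiff]
          exact Or.inl ⟨hl.1, fun hyI => hy'.2 (hIS2 hyI)⟩
        · exact Finset.mem_union_right _ (hmemU2 y hy hr)
      have hT1I : (T1 \ I).card = 1 := by
        have := Finset.card_sdiff_add_card_inter T1 I
        omega
      have hU2ge : 3 ≤ U2.card := by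
        have h4 : (S1 \ S2).card = 4 := by omega
        have := Finset.card_le_card hsub
        have := Finset.card_union_le (T1 \ I) U2
        omega
      have hT2I3 : (T2 ∩ I).card = 3 := by
        by_contra hne3
        have hle : (T2 ∩ I).card ≤ 2 := by
          have : (T2 ∩ I).card ≤ 3 := hT2card ▸ Finset.card_le_card Finset.inter_subset_left
          omega
        have hcc : ((T2 ∩ I).card).choose 2 ≤ Nat.choose 2 2 :=
          Nat.choose_le_choose 2 hle
        have h22 : Nat.choose 2 2 = 1 := by decide
        omega
      have hT2I : T2 ⊆ I := by
        have : T2 ∩ I = T2 :=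
          Finset.eq_of_subset_of_card_le Finset.inter_subset_left (by omega)
        rw [← this]
        exact Finset.inter_subset_right
      -- now the symmetric argument
      obtain ⟨y, hy⟩ : (S2 \ S1).Nonempty := by
        rw [← Finset.card_pos]
        have := Finset.card_sdiff_add_card_inter S2 S1
        rw [Finset.inter_comm, ← hIdef] at this
        omega
      rw [Finset.mem_sdiff] at hy
      obtain ⟨hy2, hy1⟩ := hy
      have hkey2 := key_twos hSTS h2 h1 hc2 hy2 hy1
      have h5'' : 5 ≤ (S2 ∩ S1).card := by rw [Finset.inter_comm, ← hIdef]; omega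
      rcases hkey2.2.1 h5'' with hl | hr
      · exact hy1 (hIS1 (hT2I hl.1))
      · -- every y ∈ S2 \ S1 lands in U1; but |T1 ∩ I| = 2 gives capacity 1
        set U1 := (Finset.powersetCard 2 (T1 ∩ (S2 ∩ S1))).biUnion
            (fun P => (Bl.filter (fun b => P ⊆ b)).biUnion (fun b => b \ S1)) with hU1
        have hU1card : U1.card ≤ ((T1 ∩ (S2 ∩ S1)).card).choose 2 :=
          pair_cover_bound hSTS ((Finset.inter_subset_left).trans hT1S1)
        have hsub1 : S2 \ S1 ⊆ U1 := by
          intro z hz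
          have hz' := Finset.mem_sdiff.mp hz
          rcases (key_twos hSTS h2 h1 hc2 hz'.1 hz'.2).2.1 h5'' with hl2 | hr2
          · exact absurd (hIS1 (hT2I hl2.1)) hz'.2
          · obtain ⟨c, hcBl, hzc, hcI, hcT1⟩ := hr2
            rw [hU1, Finset.mem_biUnion]
            refine ⟨c ∩ (S2 ∩ S1), ?_, ?_⟩
            · rw [Finset.mem_powersetCard]
              exact ⟨Finset.subset_inter hcT1 Finset.inter_subset_right, hcI⟩
            · rw [Finset.mem_biUnion]
              refine ⟨c, ?_, ?_⟩
              · rw [Finset.mem_filter]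
                exact ⟨hcBl, Finset.inter_subset_left⟩
              · rw [Finset.mem_sdiff]; exact ⟨hzc, hz'.2⟩
        have hcomm : T1 ∩ (S2 ∩ S1) = T1 ∩ I := by rw [Finset.inter_comm S2 S1]
        have hc21 : (S2 \ S1).card = 4 := by
          have := Finset.card_sdiff_add_card_inter S2 S1
          rw [Finset.inter_comm, ← hIdef] at this
          omega
        have := Finset.card_le_card hsub1
        rw [hc21] at this
        rw [hcomm, hTI] at hU1card
        have h22 : Nat.choose 2 2 = 1 := by decide
        omega
    · -- |T1 ∩ I| ≠ 2 : every point of S1 \ S2 lies in U2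
      have hsub : S1 \ S2 ⊆ U2 := by
        intro y hy
        have hy' := Finset.mem_sdiff.mp hy
        rcases (key_twos hSTS h1 h2 hc1 hy'.1 hy'.2).2.1 h5' with hl | hr
        · exact absurd hl.2 hTI
        · exact hmemU2 y hy hr
      have h4 : (S1 \ S2).card = 4 := by omega
      have hle3 : ((T2 ∩ I).card).choose 2 ≤ 3 := by
        have hle : (T2 ∩ I).card ≤ 3 :=
          hT2card ▸ Finset.card_le_card Finset.inter_subset_left
        have := Nat.choose_le_choose 2 hle
        have h32 : Nat.choose 3 2 = 3 := by decide
        omega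
      have := Finset.card_le_card hsub
      omega
  -- the case k = 4
  have hI4 : I.card = 4 := by omega
  by_cases hall : ∀ p ∈ I, ∀ q ∈ I, p ≠ q → (p ∈ T1 ∧ q ∈ T1) ∨ (p ∈ T2 ∧ q ∈ T2)
  · -- no good pair: counting 2-subsets
    set A1 := T1 ∩ I with hA1
    set A2 := T2 ∩ I with hA2
    have hsubP : Finset.powersetCard 2 I ⊆
        (Finset.powersetCard 2 A1) ∪ (Finset.powersetCard 2 A2) := by
      intro P hP
      rw [Finset.mem_powersetCard] at hP
      obtain ⟨p, q, hpq, rfl⟩ := Finset.card_eq_two.mp hP.2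
      have hpI : p ∈ I := hP.1 (by simp)
      have hqI : q ∈ I := hP.1 (by simp)
      rw [Finset.mem_union, Finset.mem_powersetCard, Finset.mem_powersetCard]
      rcases hall p hpI q hqI hpq with h | h
      · refine Or.inl ⟨?_, hP.2⟩
        intro z hz
        rcases Finset.mem_insert.mp hz with rfl | hz
        · exact Finset.mem_inter.mpr ⟨h.1, hpI⟩
        · rw [Finset.mem_singleton] at hz
          exact hz ▸ Finset.mem_inter.mpr ⟨h.2, hqI⟩
      · refine Or.inr ⟨?_, hP.2⟩
        intro z hz
        rcases Finset.mem_insert.mp hz with rfl | hz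
        · exact Finset.mem_inter.mpr ⟨h.1, hpI⟩
        · rw [Finset.mem_singleton] at hz
          exact hz ▸ Finset.mem_inter.mpr ⟨h.2, hqI⟩
    have hinterP : (Finset.powersetCard 2 A1) ∩ (Finset.powersetCard 2 A2) =
        Finset.powersetCard 2 (A1 ∩ A2) := by
      ext P
      simp only [Finset.mem_inter, Finset.mem_powersetCard, Finset.subset_inter_iff]
      tauto
    have hcI : (Finset.powersetCard 2 I).card = 6 := by
      rw [Finset.card_powersetCard, hI4]
      decide
    have hc6 : 6 ≤ ((Finset.powersetCard 2 A1) ∪ (Finset.powersetCard 2 A2)).card := by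
      rw [← hcI]
      exact Finset.card_le_card hsubP
    have hcup := Finset.card_union_add_card_inter
      (Finset.powersetCard 2 A1) (Finset.powersetCard 2 A2)
    rw [hinterP, Finset.card_powersetCard, Finset.card_powersetCard,
      Finset.card_powersetCard] at hcup
    have ha1 : A1.card ≤ 3 := hT1card ▸ Finset.card_le_card Finset.inter_subset_left
    have ha2 : A2.card ≤ 3 := hT2card ▸ Finset.card_le_card Finset.inter_subset_left
    have hm : A1.card + A2.card ≤ 4 + (A1 ∩ A2).card := by
      have h := Finset.card_union_add_card_inter A1 A2
      have : (A1 ∪ A2).card ≤ 4 := by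
        rw [← hI4]
        exact Finset.card_le_card (Finset.union_subset
          Finset.inter_subset_right Finset.inter_subset_right)
      omega
    have hmle : (A1 ∩ A2).card ≤ 3 := le_trans
      (Finset.card_le_card Finset.inter_subset_left) ha1
    -- numeric contradiction
    have hnum : ∀ a < 4, ∀ b < 4, ∀ c < 4, a + b ≤ 4 + c →
        6 + c.choose 2 ≤ a.choose 2 + b.choose 2 → False := by decide
    exact hnum _ (by omega) _ (by omega) _ (by omega) hm (by omega)
  · push_neg at hall
    obtain ⟨p, hpI, q, hqI, hpq, hgood⟩ := hall
    have hpS1 : p ∈ S1 := hIS1 hpI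
    have hqS1 : q ∈ S1 := hIS1 hqI
    obtain ⟨b, ⟨hb, hpb, hqb⟩, -⟩ := hSTS.2 p (hS1 hpS1) q (hS1 hqS1) hpq
    have hbB1 : b ∈ B1 := almost_block_mem hSTS h1 hb hpb hqb hpq hpS1 hqS1
      (fun h => hgood.1 h.1 h.2)
    have hbB2 : b ∈ B2 := almost_block_mem hSTS h2 hb hpb hqb hpq (hIS2 hpI) (hIS2 hqI)
      (fun h => hgood.2 h.1 h.2)
    have hbS1 : b ⊆ S1 := (h1.2.2.1 b (Finset.mem_insert_of_mem hbB1)).1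
    have hbS2 : b ⊆ S2 := (h2.2.2.1 b (Finset.mem_insert_of_mem hbB2)).1
    have hbI : b ⊆ I := Finset.subset_inter hbS1 hbS2
    have hb3 : b.card = 3 := (hSTS.1 b hb).2
    have hrcard : (I \ b).card = 1 := by
      rw [Finset.card_sdiff_of_subset hbI]; omega
    obtain ⟨r, hr⟩ := Finset.card_eq_one.mp hrcard
    have hrmem : r ∈ I \ b := hr ▸ Finset.mem_singleton_self r
    rw [Finset.mem_sdiff] at hrmem
    obtain ⟨hrI, hrb⟩ := hrmem
    have hIb : ∀ z ∈ I, z ∉ b → z = r := by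
      intro z hz hzb
      have : z ∈ I \ b := Finset.mem_sdiff.mpr ⟨hz, hzb⟩
      rw [hr, Finset.mem_singleton] at this
      exact this
    have hkeyt : ∀ t ∈ b, (r ∈ T1 ∧ t ∈ T1) ∨ (r ∈ T2 ∧ t ∈ T2) := by
      intro t ht
      have htI : t ∈ I := hbI ht
      have hrt : r ≠ t := fun h => hrb (h ▸ ht)
      obtain ⟨d, ⟨hd, hrd, htd⟩, -⟩ := hSTS.2 r (hS1 (hIS1 hrI)) t (hS1 (hIS1 htI)) hrt
      have hdnot : ¬ d ⊆ I := by
        intro hdI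
        have hdb : d ≠ b := fun h => hrb (h ▸ hrd)
        have hsubd : d.erase r ⊆ b := by
          intro z hz
          rw [Finset.mem_erase] at hz
          by_contra hzb
          exact hz.1 (hIb z (hdI hz.2) hzb)
        have hd3 : d.card = 3 := (hSTS.1 d hd).2
        have hec : (d.erase r).card = 2 := by
          rw [Finset.card_erase_of_mem hrd, hd3]
        obtain ⟨u, hu, v, hv, huv⟩ := Finset.one_lt_card.mp (by omega : 1 < (d.erase r).card)
        exact hdb (sts_unique hSTS hd hb (Finset.mem_of_mem_erase hu)
          (Finset.mem_of_mem_erase hv) (hsubd hu) (hsubd hv) huv)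
      obtain ⟨s, hs, hsI⟩ := Finset.not_subset.mp hdnot
      have hs12 : s ∉ S1 ∨ s ∉ S2 := by
        by_contra hcon
        push_neg at hcon
        exact hsI (Finset.mem_inter.mpr hcon)
      rcases hs12 with h | h
      · exact Or.inl (almost_pair_T hSTS h1 hd hrd htd hrt (hIS1 hrI) (hIS1 htI) hs h)
      · exact Or.inr (almost_pair_T hSTS h2 hd hrd htd hrt (hIS2 hrI) (hIS2 htI) hs h)
    obtain ⟨t₁, t₂, t₃, h12, h13, h23, hbeq⟩ := Finset.card_eq_three.mp hb3
    have hm1 : t₁ ∈ b := hbeq ▸ (by simp)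
    have hm2 : t₂ ∈ b := hbeq ▸ (by simp)
    have hm3 : t₃ ∈ b := hbeq ▸ (by simp)
    have hfin1 : ∀ u v, u ∈ b → v ∈ b → u ≠ v → r ∈ T1 → u ∈ T1 → v ∈ T1 → False := by
      intro u v hub hvb huv hrT huT hvT
      have heq : T1 = b := sts_unique h1.2.2 (Finset.mem_insert_self _ _)
        (Finset.mem_insert_of_mem hbB1) huT hvT hub hvb huv
      exact hrb (heq ▸ hrT)
    have hfin2 : ∀ u v, u ∈ b → v ∈ b → u ≠ v → r ∈ T2 → u ∈ T2 → v ∈ T2 → False := by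
      intro u v hub hvb huv hrT huT hvT
      have heq : T2 = b := sts_unique h2.2.2 (Finset.mem_insert_self _ _)
        (Finset.mem_insert_of_mem hbB2) huT hvT hub hvb huv
      exact hrb (heq ▸ hrT)
    rcases hkeyt t₁ hm1 with h₁ | h₁ <;> rcases hkeyt t₂ hm2 with h₂ | h₂ <;>
      rcases hkeyt t₃ hm3 with h₃ | h₃
    · exact hfin1 t₁ t₂ hm1 hm2 h12 h₁.1 h₁.2 h₂.2
    · exact hfin1 t₁ t₂ hm1 hm2 h12 h₁.1 h₁.2 h₂.2
    · exact hfin1 t₁ t₃ hm1 hm3 h13 h₁.1 h₁.2 h₃.2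
    · exact hfin2 t₂ t₃ hm2 hm3 h23 h₂.1 h₂.2 h₃.2
    · exact hfin1 t₂ t₃ hm2 hm3 h23 h₂.1 h₂.2 h₃.2
    · exact hfin2 t₁ t₃ hm1 hm3 h13 h₁.1 h₁.2 h₃.2
    · exact hfin2 t₁ t₂ hm1 hm2 h12 h₁.1 h₁.2 h₂.2
    · exact hfin2 t₁ t₂ hm1 hm2 h12 h₁.1 h₁.2 h₂.2

theorem almostSubSTS9_supports_inter_sts21 (S S' S'' : Finset α)
    (Bl B' B'' : Finset (Finset α)) (T' T'' : Finset α)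
    (hSTS : IsSTS S Bl) (hS21 : S.card = 21)
    (hS' : S' ⊆ S) (hS'' : S'' ⊆ S)
    (hc' : S'.card = 9) (hc'' : S''.card = 9)
    (h' : IsAlmostSubSTS Bl S' B' T') (h'' : IsAlmostSubSTS Bl S'' B'' T'')
    (hne : S' ≠ S'') :
    (S' ∩ S'').card = 3 ∧
    ((S' ∩ S'' ∈ B' ∧ S' ∩ S'' ∈ B'') ∨ S' ∩ S'' = T' ∨ S' ∩ S'' = T'') := by
  classical
  have hk : (S' ∩ S'').card = 3 :=
    le_antisymm (upper_bound hSTS hS' hS'' hc' hc'' h' h'' hne)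
      (lower_bound hSTS hS21 hS' hS'' hc' hc'' h' h'')
  refine ⟨hk, ?_⟩
  set I := S' ∩ S'' with hIdef
  have hIS1 : I ⊆ S' := Finset.inter_subset_left
  have hIS2 : I ⊆ S'' := Finset.inter_subset_right
  have hT1card : T'.card = 3 := (h'.2.2.1 T' (Finset.mem_insert_self _ _)).2
  have hT2card : T''.card = 3 := (h''.2.2.1 T'' (Finset.mem_insert_self _ _)).2
  by_cases hall : ∀ p ∈ I, ∀ q ∈ I, p ≠ q → (p ∈ T' ∧ q ∈ T') ∨ (p ∈ T'' ∧ q ∈ T'')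
  · -- all pairs lie in a missing triple: I = T' or I = T''
    obtain ⟨p, q, r, hpq, hpr, hqr, hIeq⟩ := Finset.card_eq_three.mp hk
    have hpI : p ∈ I := hIeq ▸ (by simp)
    have hqI : q ∈ I := hIeq ▸ (by simp)
    have hrI : r ∈ I := hIeq ▸ (by simp)
    have hsub3 : ∀ T : Finset α, T.card = 3 → p ∈ T → q ∈ T → r ∈ T → I = T := by
      intro T hT hp hq hr
      apply Finset.eq_of_subset_of_card_le _ (by omega : T.card ≤ I.card)
      rw [hIeq]
      intro z hz
      simp only [Finset.mem_insert, Finset.mem_singleton] at hz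
      rcases hz with rfl | rfl | rfl
      · exact hp
      · exact hq
      · exact hr
    refine Or.inr ?_
    rcases hall p hpI q hqI hpq with h1 | h1 <;>
      rcases hall p hpI r hrI hpr with h2 | h2 <;>
      rcases hall q hqI r hrI hqr with h3 | h3
    · exact Or.inl (hsub3 T' hT1card h1.1 h1.2 h2.2)
    · exact Or.inl (hsub3 T' hT1card h1.1 h1.2 h2.2)
    · exact Or.inl (hsub3 T' hT1card h1.1 h1.2 h3.2)
    · exact Or.inr (hsub3 T'' hT2card h2.1 h3.1 h2.2)
    · exact Or.inl (hsub3 T' hT1card h2.1 h3.1 h2.2)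
    · exact Or.inr (hsub3 T'' hT2card h1.1 h1.2 h3.2)
    · exact Or.inr (hsub3 T'' hT2card h1.1 h1.2 h2.2)
    · exact Or.inr (hsub3 T'' hT2card h1.1 h1.2 h2.2)
  · -- a good pair: its block is a common block equal to I
    push_neg at hall
    obtain ⟨p, hpI, q, hqI, hpq, hgood⟩ := hall
    obtain ⟨b, ⟨hb, hpb, hqb⟩, -⟩ :=
      hSTS.2 p (hS' (hIS1 hpI)) q (hS' (hIS1 hqI)) hpq
    have hbB1 : b ∈ B' := almost_block_mem hSTS h' hb hpb hqb hpq
      (hIS1 hpI) (hIS1 hqI) (fun h => hgood.1 h.1 h.2)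
    have hbB2 : b ∈ B'' := almost_block_mem hSTS h'' hb hpb hqb hpq
      (hIS2 hpI) (hIS2 hqI) (fun h => hgood.2 h.1 h.2)
    have hbI : b ⊆ I := Finset.subset_inter
      (h'.2.2.1 b (Finset.mem_insert_of_mem hbB1)).1
      (h''.2.2.1 b (Finset.mem_insert_of_mem hbB2)).1
    have hb3 : b.card = 3 := (hSTS.1 b hb).2
    have hbeq : b = I := Finset.eq_of_subset_of_card_le hbI (by omega)
    exact Or.inl ⟨hbeq ▸ hbB1, hbeq ▸ hbB2⟩
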